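/- Let w_1, …, w_m ∈ ℝ^D be unit vectors and, for n ∈ ℕ, let G_n ∈ ℝ^{m×m} be the symmetric matrix with entries (G_n)_{kℓ} = ⟨w_k, w_ℓ⟩^n. Then for every ñ ∈ ℕ (ñ ≥ 0), the smallest eigenvalue satisfies λ_min(G_{2+ñ}) ≥ λ_min(G_2). In particular, if G_2 is invertible with operator norm ‖G_2^{−1}‖ ≤ c₃, then every G_{2+ñ} is invertible with ‖G_{2+ñ}^{−1}‖ ≤ c₃. -/

import Mathlib

open scoped BigOperators

noncomputable def opNorm {n : Type*} [Fintype n] [DecidableEq n] (A : Matrix n n ℝ) : ℝ :=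
  ‖Matrix.toEuclideanCLM (𝕜 := ℝ) A‖

/-- Smallest eigenvalue of a symmetric matrix, via the Rayleigh quotient. -/
noncomputable def minEig {m : ℕ} (A : Matrix (Fin m) (Fin m) ℝ) : ℝ :=
  ⨅ x : {x : Fin m → ℝ // ∑ i, (x i) ^ 2 = 1}, ∑ k, ∑ l, x.1 k * A k l * x.1 l

def dot {d : ℕ} (v w : Fin d → ℝ) : ℝ := ∑ i, v i * w i

/-- Order-`n` Gram matrix `(G_n)_{kℓ} = ⟨w_k, w_ℓ⟩^n`. -/
noncomputable def gram {D m : ℕ} (w : Fin m → Fin D → ℝ) (n : ℕ) :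
    Matrix (Fin m) (Fin m) ℝ := Matrix.of fun k l => (dot (w k) (w l)) ^ n

namespace HOH

def Q {m : ℕ} (A : Matrix (Fin m) (Fin m) ℝ) (y : Fin m → ℝ) : ℝ :=
  ∑ k, ∑ l, y k * A k l * y l

lemma minEig_eq {m : ℕ} (A : Matrix (Fin m) (Fin m) ℝ) :
    minEig A = ⨅ x : {x : Fin m → ℝ // ∑ i, (x i) ^ 2 = 1}, Q A x.1 := rfl

lemma bdd {m : ℕ} (A : Matrix (Fin m) (Fin m) ℝ) :
    BddBelow (Set.range fun x : {x : Fin m → ℝ // ∑ i, (x i) ^ 2 = 1} => Q A x.1) := by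
  refine ⟨-(∑ k, ∑ l, |A k l|), ?_⟩
  rintro - ⟨⟨x, hx⟩, rfl⟩
  have hx1 : ∀ i, |x i| ≤ 1 := by
    intro i
    rw [← sq_le_one_iff_abs_le_one]
    calc x i ^ 2 ≤ ∑ j, x j ^ 2 :=
          Finset.single_le_sum (fun j _ => sq_nonneg (x j)) (Finset.mem_univ i)
      _ = 1 := hx
  have habs : |Q A x| ≤ ∑ k, ∑ l, |A k l| := by
    refine (Finset.abs_sum_le_sum_abs _ _).trans (Finset.sum_le_sum fun k _ => ?_)
    refine (Finset.abs_sum_le_sum_abs _ _).trans (Finset.sum_le_sum fun l _ => ?_)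
    rw [abs_mul, abs_mul]
    calc |x k| * |A k l| * |x l| ≤ 1 * |A k l| * 1 := by
          apply mul_le_mul (mul_le_mul (hx1 k) le_rfl (abs_nonneg _) zero_le_one) (hx1 l)
            (abs_nonneg _) (by positivity)
      _ = |A k l| := by ring
  linarith [neg_abs_le (Q A x), habs]

lemma minEig_le {m : ℕ} (A : Matrix (Fin m) (Fin m) ℝ) (y : Fin m → ℝ)
    (hy : ∑ i, (y i) ^ 2 = 1) : minEig A ≤ Q A y :=
  ciInf_le (bdd A) ⟨y, hy⟩

lemma minEig_smul_le {m : ℕ} (A : Matrix (Fin m) (Fin m) ℝ) (y : Fin m → ℝ) :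
    minEig A * (∑ i, (y i) ^ 2) ≤ Q A y := by
  rcases eq_or_lt_of_le (Finset.sum_nonneg fun i _ => sq_nonneg (y i)) with h0 | hpos
  · have hy : ∀ i, y i = 0 := by
      intro i
      have := (Finset.sum_eq_zero_iff_of_nonneg (fun i _ => sq_nonneg (y i))).1 h0.symm i
        (Finset.mem_univ i)
      exact pow_eq_zero_iff (n := 2) (by norm_num) |>.1 this
    simp [Q, hy, ← h0]
  · set s : ℝ := ∑ i, (y i) ^ 2 with hs
    have hssq : Real.sqrt s ^ 2 = s := Real.sq_sqrt hpos.le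
    have hsqpos : 0 < Real.sqrt s := Real.sqrt_pos.2 hpos
    set x : Fin m → ℝ := fun i => y i / Real.sqrt s with hxdef
    have hx : ∑ i, (x i) ^ 2 = 1 := by
      simp only [hxdef, div_pow, ← Finset.sum_div, hssq]
      exact div_self hpos.ne'
    have hQ : Q A x = Q A y / s := by
      simp only [Q, hxdef, Finset.sum_div]
      refine Finset.sum_congr rfl fun k _ => (Finset.sum_congr rfl fun l _ => ?_)
      have : y k / Real.sqrt s * A k l * (y l / Real.sqrt s)
          = y k * A k l * y l / Real.sqrt s ^ 2 := by ring
      rw [this, hssq]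
    have := minEig_le A x hx
    rw [hQ, le_div_iff₀ hpos] at this
    linarith


variable {D m : ℕ}

lemma q_gram_add (w : Fin m → Fin D → ℝ) (n nt : ℕ) (y : Fin m → ℝ) :
    Q (gram w (n + nt)) y
      = ∑ f : Fin nt → Fin D, Q (gram w n) (fun k => y k * ∏ j, w k (f j)) := by
  simp only [Q, gram, Matrix.of_apply, dot]
  have key : ∀ k l : Fin m,
      y k * (∑ i, w k i * w l i) ^ (n + nt) * y l
        = ∑ f : Fin nt → Fin D,
            (y k * ∏ j, w k (f j)) * (∑ i, w k i * w l i) ^ n * (y l * ∏ j, w l (f j)) := by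
    intro k l
    rw [pow_add, Fintype.sum_pow (fun i => w k i * w l i) nt, Finset.mul_sum, Finset.mul_sum,
      Finset.sum_mul]
    refine Finset.sum_congr rfl fun f _ => ?_
    rw [Finset.prod_mul_distrib]; ring
  simp only [key]
  exact (Finset.sum_congr rfl fun k _ => Finset.sum_comm).trans Finset.sum_comm

lemma q_gram_nonneg (w : Fin m → Fin D → ℝ) (n : ℕ) (y : Fin m → ℝ) :
    0 ≤ Q (gram w n) y := by
  have h := q_gram_add w 0 n y
  rw [Nat.zero_add] at h
  rw [h]
  refine Finset.sum_nonneg fun f _ => ?_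
  have : Q (gram w 0) (fun k => y k * ∏ j, w k (f j))
      = (∑ k, y k * ∏ j, w k (f j)) ^ 2 := by
    simp only [Q, gram, Matrix.of_apply, pow_zero, mul_one, sq, Finset.sum_mul_sum]
  rw [this]; positivity

lemma prod_sq_sum (w : Fin m → Fin D → ℝ) (hw : ∀ k, ∑ i, (w k i) ^ 2 = 1)
    (k : Fin m) (nt : ℕ) : ∑ f : Fin nt → Fin D, (∏ j, w k (f j)) ^ 2 = 1 := by
  have : ∀ f : Fin nt → Fin D, (∏ j, w k (f j)) ^ 2 = ∏ j, (w k (f j)) ^ 2 := by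
    intro f; rw [Finset.prod_pow]
  simp only [this]
  rw [← Fintype.sum_pow (fun i => w k i ^ 2) nt, hw k, one_pow]

lemma gram_symm (w : Fin m → Fin D → ℝ) (n : ℕ) (k l : Fin m) :
    gram w n k l = gram w n l k := by
  simp only [gram, Matrix.of_apply, dot]
  congr 1
  exact Finset.sum_congr rfl fun i _ => mul_comm _ _


lemma sphere_nonempty (hm : 0 < m) :
    Nonempty {x : Fin m → ℝ // ∑ i, (x i) ^ 2 = 1} := by
  refine ⟨⟨Pi.single ⟨0, hm⟩ 1, ?_⟩⟩
  simp [Pi.single_apply]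

lemma part1 (w : Fin m → Fin D → ℝ) (hw : ∀ k, ∑ i, (w k i) ^ 2 = 1) (nt : ℕ) :
    minEig (gram w 2) ≤ minEig (gram w (2 + nt)) := by
  rcases Nat.eq_zero_or_pos m with hm | hm
  · subst hm
    haveI : IsEmpty {x : Fin 0 → ℝ // ∑ i, (x i) ^ 2 = 1} := by
      refine ⟨fun x => ?_⟩
      have := x.2
      simp at this
    rw [minEig, minEig, Real.iInf_of_isEmpty, Real.iInf_of_isEmpty]
  · haveI := sphere_nonempty (m := m) hm
    rw [minEig_eq (gram w (2 + nt))]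
    refine le_ciInf fun x => ?_
    obtain ⟨x, hx⟩ := x
    have hsum : ∑ f : Fin nt → Fin D, ∑ k, (x k * ∏ j, w k (f j)) ^ 2 = 1 := by
      refine Finset.sum_comm.trans ?_
      simp only [mul_pow]
      simp_rw [← Finset.mul_sum, prod_sq_sum w hw, mul_one]
      exact hx
    calc minEig (gram w 2)
        = ∑ f : Fin nt → Fin D, minEig (gram w 2) * (∑ k, (x k * ∏ j, w k (f j)) ^ 2) := by
          rw [← Finset.mul_sum, hsum, mul_one]
      _ ≤ ∑ f : Fin nt → Fin D, Q (gram w 2) (fun k => x k * ∏ j, w k (f j)) :=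
          Finset.sum_le_sum fun f _ => minEig_smul_le _ _
      _ = Q (gram w (2 + nt)) x := (q_gram_add w 2 nt x).symm

lemma cs {m : ℕ} (A : Matrix (Fin m) (Fin m) ℝ) (hsym : ∀ k l, A k l = A l k)
    (hpsd : ∀ z, 0 ≤ Q A z) (x y : Fin m → ℝ) :
    (∑ k, ∑ l, x k * A k l * y l) ^ 2 ≤ Q A x * Q A y := by
  set b := ∑ k, ∑ l, x k * A k l * y l with hb
  have hyx : ∑ k, ∑ l, y k * A k l * x l = b := by
    rw [hb]
    refine Finset.sum_comm.trans ?_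
    refine Finset.sum_congr rfl fun l _ => Finset.sum_congr rfl fun k _ => ?_
    rw [hsym k l]; ring
  have hq : ∀ t : ℝ, 0 ≤ Q A y * (t * t) + (2 * b) * t + Q A x := by
    intro t
    have h := hpsd (fun i => x i + t * y i)
    have hexp : Q A (fun i => x i + t * y i)
        = Q A x + t * (∑ k, ∑ l, x k * A k l * y l) + t * (∑ k, ∑ l, y k * A k l * x l)
          + t ^ 2 * Q A y := by
      simp only [Q, Finset.mul_sum, ← Finset.sum_add_distrib]
      exact Finset.sum_congr rfl fun k _ =>
        (Finset.sum_congr rfl fun l _ => by ring)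
    rw [hexp, hyx, ← hb] at h
    nlinarith [h]
  have hd := discrim_le_zero hq
  rw [discrim] at hd
  nlinarith [hd]


open scoped RealInnerProductSpace

lemma q_eq_mulVec {m : ℕ} (A : Matrix (Fin m) (Fin m) ℝ) (x : Fin m → ℝ) :
    Q A x = ∑ k, x k * A.mulVec x k := by
  simp [Q, Matrix.mulVec, dotProduct, Finset.mul_sum, mul_assoc]

lemma norm_e {m : ℕ} (x : Fin m → ℝ) :
    ‖(WithLp.equiv 2 (Fin m → ℝ)).symm x‖ ^ 2 = ∑ i, (x i) ^ 2 := by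
  rw [EuclideanSpace.norm_eq, Real.sq_sqrt (by positivity)]
  simp [WithLp.equiv_symm_apply, Real.norm_eq_abs, sq_abs]

lemma inner_e {m : ℕ} (x y : Fin m → ℝ) :
    ⟪(WithLp.equiv 2 (Fin m → ℝ)).symm x, (WithLp.equiv 2 (Fin m → ℝ)).symm y⟫
      = ∑ i, x i * y i := by
  simp [PiLp.inner_apply, WithLp.equiv_symm_apply, RCLike.inner_apply, conj_trivial, mul_comm]

lemma clm_apply {m : ℕ} (A : Matrix (Fin m) (Fin m) ℝ) (x : Fin m → ℝ) :
    Matrix.toEuclideanCLM (𝕜 := ℝ) A ((WithLp.equiv 2 (Fin m → ℝ)).symm x)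
      = (WithLp.equiv 2 (Fin m → ℝ)).symm (A.mulVec x) := by
  exact Matrix.toEuclideanCLM_toLp A x

lemma opNorm_inv_le {m : ℕ} (A : Matrix (Fin m) (Fin m) ℝ) (hA : IsUnit A) {μ : ℝ}
    (hμ : 0 < μ) (h : ∀ y, μ * (∑ i, (y i) ^ 2) ≤ Q A y) : opNorm A⁻¹ ≤ μ⁻¹ := by
  have hdet : IsUnit A.det := (Matrix.isUnit_iff_isUnit_det A).1 hA
  have hmul : A * A⁻¹ = 1 := Matrix.mul_nonsing_inv A hdet
  rw [opNorm]
  refine ContinuousLinearMap.opNorm_le_bound _ (inv_nonneg.2 hμ.le) fun v => ?_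
  set v' : Fin m → ℝ := WithLp.equiv 2 (Fin m → ℝ) v with hv'
  have hv : (WithLp.equiv 2 (Fin m → ℝ)).symm v' = v := by simp [hv']
  set z : Fin m → ℝ := A⁻¹.mulVec v' with hz
  have happ : Matrix.toEuclideanCLM (𝕜 := ℝ) A⁻¹ v = (WithLp.equiv 2 (Fin m → ℝ)).symm z := by
    rw [← hv, clm_apply]
  have hAz : A.mulVec z = v' := by
    rw [hz, Matrix.mulVec_mulVec, hmul, Matrix.one_mulVec]
  have h1 : μ * (∑ i, (z i) ^ 2) ≤ Q A z := h z
  have h2 : Q A z = ∑ k, z k * v' k := by rw [q_eq_mulVec, hAz]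
  have h3 : ∑ k, z k * v' k ≤ ‖(WithLp.equiv 2 (Fin m → ℝ)).symm z‖ * ‖v‖ := by
    rw [← inner_e, ← hv]
    exact real_inner_le_norm _ _
  set nz := ‖(WithLp.equiv 2 (Fin m → ℝ)).symm z‖ with hnz
  have hnz2 : nz ^ 2 = ∑ i, (z i) ^ 2 := norm_e z
  have key : μ * nz ^ 2 ≤ nz * ‖v‖ := by rw [hnz2]; linarith
  have hfin : nz ≤ μ⁻¹ * ‖v‖ := by
    rw [le_inv_mul_iff₀ hμ]
    rcases eq_or_lt_of_le (norm_nonneg ((WithLp.equiv 2 (Fin m → ℝ)).symm z)) with h0 | h0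
    · rw [← hnz] at h0
      rw [← h0, mul_zero]
      exact norm_nonneg v
    · rw [← hnz] at h0
      nlinarith [key]
  rw [happ]
  exact hfin


lemma part2 (w : Fin m → Fin D → ℝ) (hw : ∀ k, ∑ i, (w k i) ^ 2 = 1) (hm : 0 < m)
    (c₃ : ℝ) (hU : IsUnit (gram w 2)) (hc : opNorm (gram w 2)⁻¹ ≤ c₃) (nt : ℕ) :
    IsUnit (gram w (2 + nt)) ∧ opNorm (gram w (2 + nt))⁻¹ ≤ c₃ := by
  set A := gram w 2 with hA
  have hdet : IsUnit A.det := (Matrix.isUnit_iff_isUnit_det A).1 hU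
  have hmul : A * A⁻¹ = 1 := Matrix.mul_nonsing_inv A hdet
  have hQxlb : ∀ x : Fin m → ℝ, (∑ i, (x i) ^ 2 = 1) → 1 ≤ Q A x * c₃ := by
    intro x hx
    set y : Fin m → ℝ := A⁻¹.mulVec x with hy
    have hAy : A.mulVec y = x := by
      rw [hy, Matrix.mulVec_mulVec, hmul, Matrix.one_mulVec]
    have hb : ∑ k, ∑ l, x k * A k l * y l = 1 := by
      calc ∑ k, ∑ l, x k * A k l * y l = ∑ k, x k * A.mulVec y k := by
            simp [Matrix.mulVec, dotProduct, Finset.mul_sum, mul_assoc]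
        _ = ∑ k, (x k) ^ 2 := by rw [hAy]; exact Finset.sum_congr rfl fun k _ => (sq (x k)).symm
        _ = 1 := hx
    have hnx : ‖(WithLp.equiv 2 (Fin m → ℝ)).symm x‖ = 1 := by
      have h1 := norm_e x
      rw [hx] at h1
      nlinarith [norm_nonneg ((WithLp.equiv 2 (Fin m → ℝ)).symm x)]
    have hQy : Q A y ≤ c₃ := by
      have h1 : Q A y = ∑ k, y k * x k := by rw [q_eq_mulVec, hAy]
      have h2 : ∑ k, y k * x k ≤ ‖(WithLp.equiv 2 (Fin m → ℝ)).symm y‖ *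
          ‖(WithLp.equiv 2 (Fin m → ℝ)).symm x‖ := by
        rw [← inner_e]
        exact real_inner_le_norm _ _
      have h3 : ‖(WithLp.equiv 2 (Fin m → ℝ)).symm y‖ ≤ opNorm A⁻¹ := by
        have := (Matrix.toEuclideanCLM (𝕜 := ℝ) A⁻¹).le_opNorm
          ((WithLp.equiv 2 (Fin m → ℝ)).symm x)
        rw [clm_apply, hnx, mul_one] at this
        exact this
      have h4 : (0:ℝ) ≤ ‖(WithLp.equiv 2 (Fin m → ℝ)).symm x‖ := norm_nonneg _
      calc Q A y ≤ ‖(WithLp.equiv 2 (Fin m → ℝ)).symm y‖ *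
            ‖(WithLp.equiv 2 (Fin m → ℝ)).symm x‖ := by rw [h1]; exact h2
        _ = ‖(WithLp.equiv 2 (Fin m → ℝ)).symm y‖ := by rw [hnx, mul_one]
        _ ≤ opNorm A⁻¹ := h3
        _ ≤ c₃ := hc
    have hcs := cs A (gram_symm w 2) (q_gram_nonneg w 2) x y
    rw [hb, one_pow] at hcs
    nlinarith [q_gram_nonneg w 2 x, q_gram_nonneg w 2 y]
  obtain ⟨⟨x₀, hx₀⟩⟩ := sphere_nonempty (m := m) hm
  have hc₃pos : 0 < c₃ := by nlinarith [hQxlb x₀ hx₀, q_gram_nonneg w 2 x₀]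
  have hlb : c₃⁻¹ ≤ minEig A := by
    haveI := sphere_nonempty (m := m) hm
    rw [minEig_eq]
    refine le_ciInf fun x => ?_
    obtain ⟨x, hx⟩ := x
    have h1 := hQxlb x hx
    rw [inv_eq_one_div, div_le_iff₀ hc₃pos]
    linarith
  have hμ : c₃⁻¹ ≤ minEig (gram w (2 + nt)) := hlb.trans (part1 w hw nt)
  have hμpos : 0 < minEig (gram w (2 + nt)) := lt_of_lt_of_le (inv_pos.2 hc₃pos) hμ
  set B := gram w (2 + nt) with hB
  have hherm : B.IsHermitian := by
    refine Matrix.IsHermitian.ext fun k l => ?_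
    simp only [hB]
    rw [gram_symm w (2 + nt) l k]
    simp
  have hBpd : B.PosDef := by
    refine Matrix.PosDef.of_dotProduct_mulVec_pos hherm fun v hv => ?_
    have hvsq : 0 < ∑ i, (v i) ^ 2 := by
      rcases Function.ne_iff.1 hv with ⟨i, hi⟩
      refine Finset.sum_pos' (fun j _ => sq_nonneg (v j)) ⟨i, Finset.mem_univ i, ?_⟩
      have hi' : v i ≠ 0 := by simpa using hi
      exact lt_of_le_of_ne (sq_nonneg (v i)) (Ne.symm (pow_ne_zero 2 hi'))
    have hq : 0 < Q B v := lt_of_lt_of_le (mul_pos hμpos hvsq) (minEig_smul_le B v)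
    have hdp : dotProduct (star v) (B.mulVec v) = Q B v := by
      rw [q_eq_mulVec]
      simp [dotProduct]
    rw [hdp]
    exact hq
  have hBunit : IsUnit B := (Matrix.isUnit_iff_isUnit_det B).2
    (isUnit_iff_ne_zero.2 hBpd.det_pos.ne')
  refine ⟨hBunit, ?_⟩
  have hop := opNorm_inv_le B hBunit hμpos (minEig_smul_le B)
  calc opNorm B⁻¹ ≤ (minEig B)⁻¹ := hop
    _ ≤ (c₃⁻¹)⁻¹ := inv_anti₀ (inv_pos.2 hc₃pos) hμ
    _ = c₃ := inv_inv c₃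

end HOH

/-- Higher order Hadamard products: for unit vectors `w_1, …, w_m`,
`λ_min(G_{2+ñ}) ≥ λ_min(G_2)` for every `ñ ≥ 0`; in particular if `G_2` is invertible with
`‖G_2⁻¹‖ ≤ c₃` then every `G_{2+ñ}` is invertible with `‖G_{2+ñ}⁻¹‖ ≤ c₃`. -/


theorem higher_order_hadamard_min_eigenvalue
    (D m : ℕ) (w : Fin m → Fin D → ℝ) (hw : ∀ k, ∑ i, (w k i) ^ 2 = 1) :
    (∀ nt : ℕ, minEig (gram w 2) ≤ minEig (gram w (2 + nt))) ∧
    (∀ c₃ : ℝ, IsUnit (gram w 2) → opNorm (gram w 2)⁻¹ ≤ c₃ →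
      ∀ nt : ℕ, IsUnit (gram w (2 + nt)) ∧ opNorm (gram w (2 + nt))⁻¹ ≤ c₃) := by
  refine ⟨HOH.part1 w hw, fun c₃ hU hc nt => ?_⟩
  rcases Nat.eq_zero_or_pos m with hm | hm
  · subst hm
    have heq : gram w (2 + nt) = gram w 2 := Subsingleton.elim _ _
    rw [heq]
    exact ⟨hU, hc⟩
  · exact HOH.part2 w hw hm c₃ hU hc nt
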